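/- Let Z^g_n = L_n^α + (1 - 2^α) L_n + 2^α (n+2) with L_n = 3 + Binomial(n-1,p), 0 < p < 1, and integer α ≥ 3. Then for every r > 0, Z^g_n / n^α converges to p^α in L^r (in r-th mean) as n → ∞. -/

import Mathlib

open Filter MeasureTheory Asymptotics Topology

/-- Expectation of `f` under a Binomial(m, p) distribution, as a finite sum. -/
noncomputable def binExp (m : ℕ) (p : ℝ) (f : ℕ → ℝ) : ℝ :=
  ∑ k ∈ Finset.range (m+1), (m.choose k : ℝ) * p^k * (1-p)^(m-k) * f k

/-- Variance of `f` under a Binomial(m, p) distribution. -/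
noncomputable def binVar (m : ℕ) (p : ℝ) (f : ℕ → ℝ) : ℝ :=
  binExp m p (fun k => (f k - binExp m p f)^2)

lemma binExp_one (m : ℕ) (p : ℝ) : binExp m p (fun _ => 1) = 1 := by
  calc binExp m p (fun _ => 1)
      = ∑ k ∈ Finset.range (m+1), p^k * (1-p)^(m-k) * (m.choose k : ℝ) :=
        Finset.sum_congr rfl fun k _ => by simp [binExp]; ring
    _ = (p + (1-p))^m := (add_pow p (1-p) m).symm
    _ = 1 := by norm_num

lemma binExp_id (m : ℕ) (p : ℝ) : binExp m p (fun k => (k:ℝ)) = m * p := by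
  cases m with
  | zero => simp [binExp]
  | succ m =>
    have h1 := binExp_one m p
    simp only [binExp] at h1 ⊢
    rw [Finset.sum_range_succ']
    have key : ∀ i ∈ Finset.range (m+1),
        ((m+1).choose (i+1) : ℝ) * p^(i+1) * (1-p)^(m+1-(i+1)) * ((i+1 : ℕ):ℝ)
          = ((m+1 : ℕ):ℝ) * p * ((m.choose i : ℝ) * p^i * (1-p)^(m-i) * 1) := by
      intro i hi
      have hc : ((m+1) * m.choose i : ℕ) = ((m+1).choose (i+1) * (i+1) : ℕ) :=
        Nat.add_one_mul_choose_eq m i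
      have hc' : ((m+1 : ℕ):ℝ) * (m.choose i : ℝ) = ((m+1).choose (i+1) : ℝ) * ((i+1 : ℕ):ℝ) := by
        exact_mod_cast congrArg (fun x : ℕ => (x:ℝ)) hc
      have hs : m + 1 - (i+1) = m - i := by omega
      rw [hs]
      push_cast at hc' ⊢
      linear_combination (p^(i+1) * (1-p)^(m-i)) * hc'.symm
    rw [Finset.sum_congr rfl key, ← Finset.mul_sum, h1]
    push_cast
    ring

lemma binExp_id2 (m : ℕ) (p : ℝ) :
    binExp m p (fun k => (k:ℝ) * ((k:ℝ) - 1)) = m * ((m:ℝ) - 1) * p^2 := by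
  cases m with
  | zero => simp [binExp]
  | succ m =>
    have h1 := binExp_id m p
    simp only [binExp] at h1 ⊢
    rw [Finset.sum_range_succ']
    have key : ∀ i ∈ Finset.range (m+1),
        ((m+1).choose (i+1) : ℝ) * p^(i+1) * (1-p)^(m+1-(i+1)) * (((i+1 : ℕ):ℝ) * (((i+1 : ℕ):ℝ) - 1))
          = ((m+1 : ℕ):ℝ) * p * ((m.choose i : ℝ) * p^i * (1-p)^(m-i) * (i:ℝ)) := by
      intro i hi
      have hc : ((m+1) * m.choose i : ℕ) = ((m+1).choose (i+1) * (i+1) : ℕ) :=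
        Nat.add_one_mul_choose_eq m i
      have hc' : ((m+1 : ℕ):ℝ) * (m.choose i : ℝ) = ((m+1).choose (i+1) : ℝ) * ((i+1 : ℕ):ℝ) := by
        exact_mod_cast congrArg (fun x : ℕ => (x:ℝ)) hc
      have hs : m + 1 - (i+1) = m - i := by omega
      rw [hs]
      push_cast at hc' ⊢
      linear_combination (p^(i+1) * (1-p)^(m-i) * (i:ℝ)) * hc'.symm
    rw [Finset.sum_congr rfl key, ← Finset.mul_sum, h1]
    push_cast
    ring

lemma binExp_decomp (m : ℕ) (p a b c : ℝ) :
    binExp m p (fun k => c * ((k:ℝ) * ((k:ℝ) - 1)) + b * (k:ℝ) + a)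
      = c * binExp m p (fun k => (k:ℝ) * ((k:ℝ) - 1)) + b * binExp m p (fun k => (k:ℝ))
        + a * binExp m p (fun _ => 1) := by
  simp only [binExp, Finset.mul_sum, ← Finset.sum_add_distrib]
  exact Finset.sum_congr rfl fun k _ => by ring

lemma binExp_var (m : ℕ) (p : ℝ) :
    binExp m p (fun k => ((k:ℝ) - m * p)^2) = m * p * (1 - p) := by
  have h : (fun k : ℕ => ((k:ℝ) - m * p)^2)
      = fun k : ℕ => 1 * ((k:ℝ) * ((k:ℝ) - 1)) + (1 - 2*(m:ℝ)*p) * (k:ℝ) + ((m:ℝ)*p)^2 := by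
    funext k; ring
  rw [h, binExp_decomp, binExp_id, binExp_id2, binExp_one]
  ring

lemma binExp_affine (m : ℕ) (p a b : ℝ) (f : ℕ → ℝ) :
    binExp m p (fun k => a + b * f k) = a + b * binExp m p f := by
  have h0 := binExp_one m p
  simp only [binExp] at h0 ⊢
  calc ∑ k ∈ Finset.range (m+1), (m.choose k : ℝ) * p^k * (1-p)^(m-k) * (a + b * f k)
      = a * ∑ k ∈ Finset.range (m+1), (m.choose k : ℝ) * p^k * (1-p)^(m-k) * 1
        + b * ∑ k ∈ Finset.range (m+1), (m.choose k : ℝ) * p^k * (1-p)^(m-k) * f k := by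
        rw [Finset.mul_sum, Finset.mul_sum, ← Finset.sum_add_distrib]
        exact Finset.sum_congr rfl fun k _ => by ring
    _ = a + b * ∑ k ∈ Finset.range (m+1), (m.choose k : ℝ) * p^k * (1-p)^(m-k) * f k := by
        rw [h0]; ring

lemma binExp_mono (m : ℕ) {p : ℝ} (hp0 : 0 ≤ p) (hp1 : p ≤ 1) {f g : ℕ → ℝ}
    (h : ∀ k ∈ Finset.range (m+1), f k ≤ g k) : binExp m p f ≤ binExp m p g := by
  apply Finset.sum_le_sum
  intro k hk
  have hw : 0 ≤ (m.choose k : ℝ) * p^k * (1-p)^(m-k) :=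
    mul_nonneg (mul_nonneg (by positivity) (by positivity)) (pow_nonneg (by linarith) _)
  exact mul_le_mul_of_nonneg_left (h k hk) hw

lemma binExp_nonneg (m : ℕ) {p : ℝ} (hp0 : 0 ≤ p) (hp1 : p ≤ 1) {f : ℕ → ℝ}
    (h : ∀ k ∈ Finset.range (m+1), 0 ≤ f k) : 0 ≤ binExp m p f := by
  apply Finset.sum_nonneg
  intro k hk
  have hw : 0 ≤ (m.choose k : ℝ) * p^k * (1-p)^(m-k) :=
    mul_nonneg (mul_nonneg (by positivity) (by positivity)) (pow_nonneg (by linarith) _)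
  exact mul_nonneg hw (h k hk)


set_option maxHeartbeats 4000000 in
/-- Z^g_n / n^α → p^α in L^r for every r > 0: E[|Z^g_n/n^α - p^α|^r] → 0. -/
theorem stmt9 (p : ℝ) (hp0 : 0 < p) (hp1 : p < 1) (α : ℕ) (hα : 3 ≤ α)
    (r : ℝ) (hr : 0 < r) :
    Filter.Tendsto (fun n : ℕ =>
      binExp (n-1) p (fun k => |((((k : ℝ) + 3) ^ α + (1 - 2 ^ α) * ((k : ℝ) + 3) + 2 ^ α * ((n : ℝ) + 2)) / (n : ℝ) ^ α - p ^ α)| ^ r))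
      Filter.atTop (𝓝 0) := by
  have hp01 : (0:ℝ) ≤ p := hp0.le
  have hp11 : p ≤ 1 := hp1.le
  have hα0 : (0:ℝ) < (α:ℝ) := by exact_mod_cast (by omega : 0 < α)
  obtain ⟨D, hDdef⟩ : ∃ D : ℝ, D = (α:ℝ) * 4^(α-1) := ⟨_, rfl⟩
  have hD : 0 < D := by rw [hDdef]; exact mul_pos hα0 (by positivity)
  obtain ⟨C, hCdef⟩ : ∃ C : ℝ, C = 3^α + 6*2^α + 1 := ⟨_, rfl⟩
  have hC1 : 1 ≤ C := by
    have h3 : (0:ℝ) ≤ 3^α := by positivity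
    have h2 : (0:ℝ) ≤ 2^α := by positivity
    rw [hCdef]; linarith
  have hC0 : 0 < C := lt_of_lt_of_le one_pos hC1
  have h2α : (1:ℝ) ≤ 2^α := by
    calc (1:ℝ) = 1^α := (one_pow α).symm
    _ ≤ 2^α := pow_le_pow_left₀ (by norm_num) (by norm_num) α
  rw [Metric.tendsto_atTop]
  intro ε hε
  obtain ⟨ε', hε'def⟩ : ∃ e : ℝ, e = min ((ε/2) ^ (1/r)) 1 := ⟨_, rfl⟩
  have hε'pos : 0 < ε' := by
    rw [hε'def]; exact lt_min (Real.rpow_pos_of_pos (by linarith) _) one_pos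
  have hε'r : ε' ^ r ≤ ε / 2 := by
    have h1 : ε' ^ r ≤ ((ε/2)^(1/r)) ^ r := by
      rw [hε'def]
      exact Real.rpow_le_rpow (by rw [hε'def] at hε'pos; exact hε'pos.le) (min_le_left _ _) hr.le
    have h2 : (((ε/2):ℝ)^(1/r)) ^ r = ε/2 := by
      rw [← Real.rpow_mul (by linarith : (0:ℝ) ≤ ε/2), one_div_mul_cancel hr.ne', Real.rpow_one]
    linarith
  obtain ⟨δ, hδdef⟩ : ∃ d : ℝ, d = ε' / (2*D) := ⟨_, rfl⟩
  have hδ : 0 < δ := by rw [hδdef]; exact div_pos hε'pos (by linarith)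
  obtain ⟨N1, hN1⟩ := exists_nat_gt ((4*D + 6*2^α) * 2 / ε')
  obtain ⟨N2, hN2⟩ := exists_nat_gt (C^r * p * 2 / (δ^2 * ε))
  refine ⟨max (max N1 N2) 1, fun n hn => ?_⟩
  have hn1 : 1 ≤ n := le_trans (le_max_right _ _) hn
  have hnN1 : (N1:ℝ) ≤ (n:ℝ) := by
    exact_mod_cast le_trans (le_trans (le_max_left _ _) (le_max_left _ _)) hn
  have hnN2 : (N2:ℝ) ≤ (n:ℝ) := by
    exact_mod_cast le_trans (le_trans (le_max_right _ _) (le_max_left _ _)) hn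
  have hnR : (1:ℝ) ≤ (n:ℝ) := by exact_mod_cast hn1
  have hnpos : (0:ℝ) < (n:ℝ) := by linarith
  obtain ⟨m, hmdef⟩ : ∃ m : ℕ, m = n - 1 := ⟨_, rfl⟩
  rw [show n - 1 = m from hmdef.symm]
  have hm : (m:ℝ) = (n:ℝ) - 1 := by
    have h : m + 1 = n := by omega
    have := congrArg (Nat.cast : ℕ → ℝ) h
    push_cast at this; linarith
  have hmn : (m:ℝ) ≤ (n:ℝ) := by rw [hm]; linarith
  have hCr : 0 < C^r := Real.rpow_pos_of_pos hC0 r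
  have key : ∀ k ∈ Finset.range (m+1),
      |(((k:ℝ)+3)^α + (1-2^α)*((k:ℝ)+3) + 2^α*((n:ℝ)+2)) / (n:ℝ)^α - p^α| ^ r
        ≤ ε/2 + (C^r / (δ*(n:ℝ))^2) * ((k:ℝ) - (m:ℝ)*p)^2 := by
    intro k hk
    have hkm : (k:ℝ) ≤ (m:ℝ) := by
      exact_mod_cast Nat.lt_succ_iff.mp (Finset.mem_range.mp hk)
    obtain ⟨x, hxdef⟩ : ∃ x : ℝ, x = ((k:ℝ)+3)/(n:ℝ) := ⟨_, rfl⟩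
    have hk3 : (k:ℝ) + 3 ≤ 3*(n:ℝ) := by
      have := hkm; rw [hm] at this; linarith
    have hx0 : 0 ≤ x := by rw [hxdef]; positivity
    have hx3 : x ≤ 3 := by rw [hxdef, div_le_iff₀ hnpos]; linarith
    have hgeom : |x^α - p^α| ≤ D * |x - p| := by
      rw [← geom_sum₂_mul x p α, abs_mul]
      apply mul_le_mul_of_nonneg_right ?_ (abs_nonneg _)
      calc |∑ i ∈ Finset.range α, x^i * p^(α-1-i)|
          ≤ ∑ i ∈ Finset.range α, |x^i * p^(α-1-i)| := Finset.abs_sum_le_sum_abs _ _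
        _ ≤ ∑ _i ∈ Finset.range α, (4:ℝ)^(α-1) := by
            apply Finset.sum_le_sum
            intro i hi
            have hiα : i < α := Finset.mem_range.mp hi
            rw [abs_mul, abs_pow, abs_pow, abs_of_nonneg hx0, abs_of_nonneg hp01]
            calc x^i * p^(α-1-i)
                ≤ 4^i * 1 := by
                  apply mul_le_mul (pow_le_pow_left₀ hx0 (by linarith) i)
                    (pow_le_one₀ hp01 hp11) (pow_nonneg hp01 _) (by positivity)
              _ ≤ 4^(α-1) := by
                  rw [mul_one]
                  exact pow_le_pow_right₀ (by norm_num) (by omega)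
        _ = D := by rw [Finset.sum_const, Finset.card_range, nsmul_eq_mul, hDdef]
    have hpow2 : (n:ℝ)^2 ≤ (n:ℝ)^α := pow_le_pow_right₀ hnR (by omega)
    have hna : (0:ℝ) < (n:ℝ)^α := by positivity
    have htail : |(1-2^α)*((k:ℝ)+3) + 2^α*((n:ℝ)+2)| ≤ 6*2^α*(n:ℝ) := by
      have hA0 : (0:ℝ) ≤ 2^α := by positivity
      have hK0 : (0:ℝ) ≤ (k:ℝ)+3 := by positivity
      have e1 : (2^α-1)*((k:ℝ)+3) ≤ 2^α*((k:ℝ)+3) :=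
        mul_le_mul_of_nonneg_right (by linarith) hK0
      have e2 : 2^α*((k:ℝ)+3) ≤ 2^α*(3*(n:ℝ)) := mul_le_mul_of_nonneg_left hk3 hA0
      have e3 : 0 ≤ (2^α-1)*((k:ℝ)+3) := mul_nonneg (by linarith) hK0
      have e4 : 0 ≤ 2^α*((n:ℝ)+2) := mul_nonneg hA0 (by linarith)
      have hAM : 2^α*((n:ℝ)+2) ≤ 2^α*(3*(n:ℝ)) :=
        mul_le_mul_of_nonneg_left (by linarith) hA0
      have e5 : 1*(3*(n:ℝ)) ≤ 2^α*(3*(n:ℝ)) :=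
        mul_le_mul_of_nonneg_right h2α (by linarith)
      have e6 : (0:ℝ) ≤ 2^α*(n:ℝ) := mul_nonneg hA0 hnpos.le
      rw [abs_le]
      constructor
      · linarith only [e1, e2, e4, hK0, e6]
      · linarith only [e3, hAM, e6, hK0, e4]
    have htb : |((1-2^α)*((k:ℝ)+3) + 2^α*((n:ℝ)+2)) / (n:ℝ)^α| ≤ 6*2^α/(n:ℝ) := by
      rw [abs_div, abs_of_nonneg hna.le]
      calc |(1-2^α)*((k:ℝ)+3) + 2^α*((n:ℝ)+2)| / (n:ℝ)^α
          ≤ (6*2^α*(n:ℝ)) / (n:ℝ)^α := by gcongr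
        _ ≤ 6*2^α/(n:ℝ) := by
            rw [div_le_div_iff₀ hna hnpos]
            have := mul_le_mul_of_nonneg_left hpow2 (show (0:ℝ) ≤ 6*2^α by positivity)
            linarith only [this]
    have hsplit : (((k:ℝ)+3)^α + (1-2^α)*((k:ℝ)+3) + 2^α*((n:ℝ)+2)) / (n:ℝ)^α - p^α
        = (x^α - p^α) + ((1-2^α)*((k:ℝ)+3) + 2^α*((n:ℝ)+2)) / (n:ℝ)^α := by
      rw [hxdef, div_pow]
      ring
    have hg1 : |(((k:ℝ)+3)^α + (1-2^α)*((k:ℝ)+3) + 2^α*((n:ℝ)+2)) / (n:ℝ)^α - p^α|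
        ≤ D*|x-p| + 6*2^α/(n:ℝ) := by
      rw [hsplit]
      calc |(x^α - p^α) + ((1-2^α)*((k:ℝ)+3) + 2^α*((n:ℝ)+2)) / (n:ℝ)^α|
          ≤ |x^α - p^α| + |((1-2^α)*((k:ℝ)+3) + 2^α*((n:ℝ)+2)) / (n:ℝ)^α| := abs_add_le _ _
        _ ≤ D*|x-p| + 6*2^α/(n:ℝ) := add_le_add hgeom htb
    by_cases hcase : |(k:ℝ) - (m:ℝ)*p| ≤ δ * (n:ℝ)
    · have hxp : |x - p| ≤ δ + 4/(n:ℝ) := by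
        have hxe : x - p = ((k:ℝ) - (m:ℝ)*p + (3 - p))/(n:ℝ) := by
          rw [hxdef, hm]; field_simp; ring
        rw [hxe, abs_div, abs_of_nonneg hnpos.le, div_le_iff₀ hnpos]
        calc |(k:ℝ) - (m:ℝ)*p + (3-p)| ≤ |(k:ℝ)-(m:ℝ)*p| + |3-p| := abs_add_le _ _
          _ ≤ δ*(n:ℝ) + 4 := add_le_add hcase (by rw [abs_of_nonneg (by linarith only [hp11])]; linarith only [hp01])
          _ = (δ + 4/(n:ℝ))*(n:ℝ) := by field_simp
      have hsmall : |(((k:ℝ)+3)^α + (1-2^α)*((k:ℝ)+3) + 2^α*((n:ℝ)+2)) / (n:ℝ)^α - p^α| ≤ ε' := by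
        have h1 : D*|x-p| ≤ D*δ + D*(4/(n:ℝ)) := by
          have := mul_le_mul_of_nonneg_left hxp hD.le
          linarith only [this]
        have hDδ : D*δ = ε'/2 := by rw [hδdef]; field_simp
        have hN1' : D*(4/(n:ℝ)) + 6*2^α/(n:ℝ) ≤ ε'/2 := by
          have hlt : (4*D + 6*2^α)*2/ε' < (n:ℝ) := lt_of_lt_of_le hN1 hnN1
          rw [div_lt_iff₀ hε'pos] at hlt
          have hsum : D*(4/(n:ℝ)) + 6*2^α/(n:ℝ) = (4*D + 6*2^α)/(n:ℝ) := by
            field_simp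
          rw [hsum, div_le_iff₀ hnpos]
          linarith only [hlt]
        calc |(((k:ℝ)+3)^α + (1-2^α)*((k:ℝ)+3) + 2^α*((n:ℝ)+2)) / (n:ℝ)^α - p^α|
            ≤ D*|x-p| + 6*2^α/(n:ℝ) := hg1
          _ ≤ ε' := by linarith only [h1, hDδ, hN1']
      have hle : |(((k:ℝ)+3)^α + (1-2^α)*((k:ℝ)+3) + 2^α*((n:ℝ)+2)) / (n:ℝ)^α - p^α| ^ r ≤ ε'^r :=
        Real.rpow_le_rpow (abs_nonneg _) hsmall hr.le
      have hq2 : 0 ≤ (C^r/(δ*(n:ℝ))^2) * ((k:ℝ)-(m:ℝ)*p)^2 := by positivity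
      linarith only [hle, hε'r, hq2]
    · push_neg at hcase
      have hbig : |(((k:ℝ)+3)^α + (1-2^α)*((k:ℝ)+3) + 2^α*((n:ℝ)+2)) / (n:ℝ)^α - p^α| ≤ C := by
        have hxa : x^α ≤ 3^α := pow_le_pow_left₀ hx0 hx3 α
        have hpa : p^α ≤ 1 := pow_le_one₀ hp01 hp11
        have habs : |x^α - p^α| ≤ 3^α + 1 := by
          rw [abs_le]
          constructor
          · linarith only [pow_nonneg hx0 α, pow_nonneg hp01 α, hxa, hpa]
          · linarith only [pow_nonneg hx0 α, pow_nonneg hp01 α, hxa, hpa]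
        have htail' : 6*2^α/(n:ℝ) ≤ 6*2^α := by
          rw [div_le_iff₀ hnpos]
          have := mul_le_mul_of_nonneg_left hnR (show (0:ℝ) ≤ 6*2^α by positivity)
          linarith only [this]
        calc |(((k:ℝ)+3)^α + (1-2^α)*((k:ℝ)+3) + 2^α*((n:ℝ)+2)) / (n:ℝ)^α - p^α|
            ≤ |x^α - p^α| + |((1-2^α)*((k:ℝ)+3) + 2^α*((n:ℝ)+2)) / (n:ℝ)^α| := by
              rw [hsplit]; exact abs_add_le _ _
          _ ≤ (3^α + 1) + 6*2^α/(n:ℝ) := add_le_add habs htb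
          _ ≤ C := by
              rw [hCdef]
              have h2A : (0:ℝ) ≤ 2^α := by positivity
              linarith only [htail', h2A]
      have hrp : |(((k:ℝ)+3)^α + (1-2^α)*((k:ℝ)+3) + 2^α*((n:ℝ)+2)) / (n:ℝ)^α - p^α| ^ r ≤ C^r :=
        Real.rpow_le_rpow (abs_nonneg _) hbig hr.le
      have hδn : 0 < δ*(n:ℝ) := mul_pos hδ hnpos
      have hsq : (δ*(n:ℝ))^2 ≤ ((k:ℝ)-(m:ℝ)*p)^2 := by
        have h := mul_self_le_mul_self hδn.le hcase.le
        have h2 := abs_mul_abs_self ((k:ℝ)-(m:ℝ)*p)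
        nlinarith only [h, h2]
      have hfin : C^r ≤ (C^r/(δ*(n:ℝ))^2) * ((k:ℝ)-(m:ℝ)*p)^2 := by
        rw [div_mul_eq_mul_div, le_div_iff₀ (by positivity)]
        have := mul_le_mul_of_nonneg_left hsq hCr.le
        linarith only [this]
      linarith only [hrp, hfin, half_pos hε]
  have hE0 : 0 ≤ binExp m p (fun k =>
      |(((k:ℝ)+3)^α + (1-2^α)*((k:ℝ)+3) + 2^α*((n:ℝ)+2)) / (n:ℝ)^α - p^α| ^ r) :=
    binExp_nonneg m hp01 hp11 fun k _ => Real.rpow_nonneg (abs_nonneg _) r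
  have hE1 : binExp m p (fun k =>
      |(((k:ℝ)+3)^α + (1-2^α)*((k:ℝ)+3) + 2^α*((n:ℝ)+2)) / (n:ℝ)^α - p^α| ^ r)
      ≤ binExp m p (fun k => ε/2 + (C^r/(δ*(n:ℝ))^2) * ((k:ℝ)-(m:ℝ)*p)^2) :=
    binExp_mono m hp01 hp11 key
  have hE2 : binExp m p (fun k => ε/2 + (C^r/(δ*(n:ℝ))^2)*((k:ℝ)-(m:ℝ)*p)^2)
      = ε/2 + (C^r/(δ*(n:ℝ))^2)*((m:ℝ)*p*(1-p)) := by
    rw [binExp_affine m p (ε/2) (C^r/(δ*(n:ℝ))^2) (fun k => ((k:ℝ)-(m:ℝ)*p)^2), binExp_var]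
  have hlast : (C^r/(δ*(n:ℝ))^2)*((m:ℝ)*p*(1-p)) < ε/2 := by
    have h1 : (m:ℝ)*p*(1-p) ≤ (n:ℝ)*p := by
      have t1 : (0:ℝ) ≤ (m:ℝ)*p := mul_nonneg (by positivity) hp0.le
      have t2 : (m:ℝ)*p*(1-p) ≤ (m:ℝ)*p*1 := mul_le_mul_of_nonneg_left (by linarith) t1
      have t3 : (m:ℝ)*p ≤ (n:ℝ)*p := mul_le_mul_of_nonneg_right hmn hp0.le
      linarith only [t2, t3]
    have hN2' : C^r*p*2/(δ^2*ε) < (n:ℝ) := lt_of_lt_of_le hN2 hnN2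
    rw [div_lt_iff₀ (by positivity)] at hN2'
    rw [div_mul_eq_mul_div, div_lt_iff₀ (by positivity)]
    have A1 := mul_lt_mul_of_pos_right hN2' hnpos
    have A2 := mul_le_mul_of_nonneg_left h1 hCr.le
    nlinarith only [A1, A2]
  rw [Real.dist_eq, sub_zero, abs_of_nonneg hE0]
  linarith only [hE1, hE2, hlast]
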